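/- For n = 2m+1 odd, the (n+1)×(n+1) matrix H_n(a,b) with superdiagonal entries h_{k,k+1} = k if k is even and k+a if k is odd, and subdiagonal entries h_{n+2-k,n+1-k} = k if k is even and k+b if k is odd (for k = 1,...,n), has characteristic polynomial ∏_{k=0}^{m} (λ² - (2k+1+a)(2k+1+b)). In particular its eigenvalues are ±√((2k+1+a)(2k+1+b)) for k = 0,...,m. -/

import Mathlib

open Polynomial

/-- The `(n+1) × (n+1)` matrix `H_n(a,b)`: tridiagonal with zero diagonal,
superdiagonal entries `h_{k,k+1} = k` (`k` even) or `k + a` (`k` odd), and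
subdiagonal entries `h_{n+2-k,n+1-k} = k` (`k` even) or `k + b` (`k` odd),
for `k = 1, ..., n` (1-based indexing). -/
def Hmat (n : ℕ) (a b : ℝ) : Matrix (Fin (n + 1)) (Fin (n + 1)) ℝ :=
  Matrix.of fun i j =>
    if (i : ℕ) + 1 = (j : ℕ) then
      (if ((i : ℕ) + 1) % 2 = 0 then ((i : ℕ) + 1 : ℝ) else ((i : ℕ) + 1 : ℝ) + a)
    else if (j : ℕ) + 1 = (i : ℕ) then
      (if (n - (j : ℕ)) % 2 = 0 then ((n - (j : ℕ) : ℕ) : ℝ)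
       else ((n - (j : ℕ) : ℕ) : ℝ) + b)
    else 0

open Finset Matrix


noncomputable section

variable {R : Type*} [CommRing R]


def tri (d s t : ℕ → R) (N : ℕ) : Matrix (Fin N) (Fin N) R :=
  Matrix.of fun i j =>
    if (i : ℕ) = (j : ℕ) then d i else if (i : ℕ) + 1 = (j : ℕ) then s i
    else if (j : ℕ) + 1 = (i : ℕ) then t j else 0

lemma tri_apply (d s t : ℕ → R) (N : ℕ) (i j : Fin N) :
    tri d s t N i j =
      if (i : ℕ) = (j : ℕ) then d i else if (i : ℕ) + 1 = (j : ℕ) then s i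
      else if (j : ℕ) + 1 = (i : ℕ) then t j else 0 := rfl

lemma tri_eq_of_coe (d s t : ℕ → R) {N M : ℕ} (i j : Fin N) (i' j' : Fin M)
    (hi : (i : ℕ) = (i' : ℕ)) (hj : (j : ℕ) = (j' : ℕ)) :
    tri d s t N i j = tri d s t M i' j' := by
  rw [tri_apply, tri_apply, hi, hj]

lemma coe_succAbove {n : ℕ} (p : Fin (n + 1)) (c : Fin n) :
    ((p.succAbove c : Fin (n + 1)) : ℕ) = if (c : ℕ) < (p : ℕ) then (c : ℕ) else (c : ℕ) + 1 := by
  rw [Fin.succAbove]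
  split_ifs with h h' h'
  · simp
  · exact absurd (by simpa [Fin.lt_def] using h) h'
  · exact absurd (by simpa [Fin.lt_def] using h') h
  · simp


lemma tri_det_zero (d s t : ℕ → R) : (tri d s t 0).det = 1 := Matrix.det_fin_zero

lemma tri_det_one (d s t : ℕ → R) : (tri d s t 1).det = d 0 := by
  rw [Matrix.det_fin_one, tri_apply]; simp

lemma tri_det_succ_succ (d s t : ℕ → R) (N : ℕ) :
    (tri d s t (N + 2)).det
      = d (N + 1) * (tri d s t (N + 1)).det - s N * t N * (tri d s t N).det := by
  rw [Matrix.det_succ_column (tri d s t (N + 2)) (Fin.last (N + 1)),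
    Fin.sum_univ_castSucc, Fin.sum_univ_castSucc]
  have hz : ∀ i : Fin N,
      ((-1 : R) ^ ((i.castSucc.castSucc : ℕ) + ((Fin.last (N+1) : Fin (N+2)) : ℕ)) *
        tri d s t (N+2) i.castSucc.castSucc (Fin.last (N+1)) *
        ((tri d s t (N+2)).submatrix i.castSucc.castSucc.succAbove
          (Fin.last (N+1)).succAbove).det) = 0 := by
    intro i
    have : tri d s t (N+2) i.castSucc.castSucc (Fin.last (N+1)) = 0 := by
      rw [tri_apply]
      have hi : (i : ℕ) < N := i.isLt
      simp only [Fin.coe_castSucc, Fin.val_last]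
      split_ifs <;> first | rfl | omega
    rw [this]; ring
  rw [Finset.sum_eq_zero (fun i _ => hz i), zero_add]
  -- the two remaining terms
  have hsub1 : ((tri d s t (N+2)).submatrix (Fin.last (N+1)).succAbove
      (Fin.last (N+1)).succAbove) = tri d s t (N+1) := by
    ext i j
    rw [Matrix.submatrix_apply, Fin.succAbove_last]
    exact tri_eq_of_coe d s t _ _ _ _ (by simp) (by simp)
  have hd : tri d s t (N+2) (Fin.last (N+1)) (Fin.last (N+1)) = d (N+1) := by
    rw [tri_apply]; simp
  have hs : tri d s t (N+2) (Fin.last N).castSucc (Fin.last (N+1)) = s N := by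
    rw [tri_apply]; simp
  -- the inner determinant for the pivot row N
  have hinner : ((tri d s t (N+2)).submatrix ((Fin.last N).castSucc : Fin (N+2)).succAbove
      (Fin.last (N+1)).succAbove).det = t N * (tri d s t N).det := by
    set C := ((tri d s t (N+2)).submatrix ((Fin.last N).castSucc : Fin (N+2)).succAbove
      (Fin.last (N+1)).succAbove) with hC
    rw [Matrix.det_succ_row C (Fin.last N), Fin.sum_univ_castSucc]
    have hz2 : ∀ j : Fin N,
        ((-1 : R) ^ (((Fin.last N : Fin (N+1)) : ℕ) + ((j.castSucc : Fin (N+1)) : ℕ)) *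
          C (Fin.last N) j.castSucc *
          (C.submatrix (Fin.last N).succAbove j.castSucc.succAbove).det) = 0 := by
      intro j
      have : C (Fin.last N) j.castSucc = 0 := by
        rw [hC, Matrix.submatrix_apply, Fin.succAbove_last, tri_apply]
        have h1 : (((Fin.last N).castSucc : Fin (N+2)).succAbove (Fin.last N) : ℕ) = N + 1 := by
          rw [coe_succAbove]; simp
        have hj : (j : ℕ) < N := j.isLt
        simp only [h1, Fin.coe_castSucc, Fin.coe_castSucc]
        split_ifs <;> first | rfl | omega
      rw [this]; ring
    rw [Finset.sum_eq_zero (fun j _ => hz2 j), zero_add]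
    have hce : C (Fin.last N) (Fin.last N) = t N := by
      rw [hC, Matrix.submatrix_apply, Fin.succAbove_last, tri_apply]
      have h1 : (((Fin.last N).castSucc : Fin (N+2)).succAbove (Fin.last N) : ℕ) = N + 1 := by
        rw [coe_succAbove]; simp
      simp only [h1, Fin.coe_castSucc, Fin.val_last]
      split_ifs <;> first | rfl | omega
    have hsub2 : C.submatrix (Fin.last N).succAbove (Fin.last N).succAbove = tri d s t N := by
      ext i j
      rw [Matrix.submatrix_apply, Fin.succAbove_last, hC, Matrix.submatrix_apply,
        Fin.succAbove_last]
      refine tri_eq_of_coe d s t _ _ _ _ ?_ (by simp)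
      rw [coe_succAbove]
      simp only [Fin.coe_castSucc, Fin.val_last]
      have := i.isLt
      rw [if_pos this]
    rw [hce, hsub2]
    have : (-1 : R) ^ (((Fin.last N : Fin (N+1)) : ℕ) + ((Fin.last N : Fin (N+1)) : ℕ)) = 1 :=
      Even.neg_one_pow ⟨N, by simp⟩
    rw [this]; ring
  rw [hsub1, hd, hs, hinner]
  have e1 : (-1 : R) ^ ((((Fin.last N).castSucc : Fin (N+2)) : ℕ) +
      ((Fin.last (N+1) : Fin (N+2)) : ℕ)) = -1 := by
    have : ((((Fin.last N).castSucc : Fin (N+2)) : ℕ) +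
        ((Fin.last (N+1) : Fin (N+2)) : ℕ)) = 2*N+1 := by simp; ring
    rw [this]
    exact Odd.neg_one_pow ⟨N, by ring⟩
  have e2 : (-1 : R) ^ (((Fin.last (N+1) : Fin (N+2)) : ℕ) +
      ((Fin.last (N+1) : Fin (N+2)) : ℕ)) = 1 :=
    Even.neg_one_pow ⟨N+1, by simp⟩
  rw [e1, e2]
  ring

noncomputable section


def wnat (m r i : ℕ) : ℕ := r.descFactorial (r - i) * (m - i).choose (r - i)

def Aprod (a : ℝ) (i r : ℕ) : ℝ := ∏ k ∈ Finset.Ico i r, (2 * (k : ℝ) + 1 + a)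

def uu (m : ℕ) (a : ℝ) (r i : ℕ) : ℝ :=
  if i ≤ r then (-2) ^ (r - i) * (wnat m r i : ℝ) * Aprod a i r else 0

def vv (m : ℕ) (a : ℝ) (r i : ℕ) : ℝ :=
  if i ≤ r then (-2) ^ (r - i) * (wnat m r i : ℝ) * Aprod a (i + 1) (r + 1) else 0

lemma Aprod_self (a : ℝ) (i : ℕ) : Aprod a i i = 1 := by simp [Aprod]

lemma Aprod_top (a : ℝ) {i r : ℕ} (h : i ≤ r) :
    Aprod a i (r + 1) = Aprod a i r * (2 * (r : ℝ) + 1 + a) :=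
  Finset.prod_Ico_succ_top h _

lemma Aprod_bot (a : ℝ) {i r : ℕ} (h : i < r) :
    Aprod a i r = (2 * (i : ℝ) + 1 + a) * Aprod a (i + 1) r :=
  Finset.prod_eq_prod_Ico_succ_bot h _

lemma wnat_self (m r : ℕ) : wnat m r r = 1 := by simp [wnat]

lemma uu_self (m : ℕ) (a : ℝ) (r : ℕ) : uu m a r r = 1 := by
  simp [uu, wnat_self, Aprod_self]

lemma vv_self (m : ℕ) (a : ℝ) (r : ℕ) : vv m a r r = 1 := by
  simp [vv, wnat_self, Aprod_self]

lemma uu_of_gt (m : ℕ) (a : ℝ) {r i : ℕ} (h : r < i) : uu m a r i = 0 := by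
  simp [uu, Nat.not_le.mpr h]

lemma vv_of_gt (m : ℕ) (a : ℝ) {r i : ℕ} (h : r < i) : vv m a r i = 0 := by
  simp [vv, Nat.not_le.mpr h]

lemma uu_last (m : ℕ) (a : ℝ) {i : ℕ} (h : i ≤ m) : uu m a (m + 1) i = 0 := by
  have : (m - i).choose (m + 1 - i) = 0 := Nat.choose_eq_zero_of_lt (by omega)
  simp [uu, wnat, this]

/-- the `w` recurrence for lemma A -/
lemma wnat_rec1 {m r i : ℕ} (hi : i < r) (hrm : r ≤ m) :
    2 * (r - i) * wnat m r i = r * (2 * m + 2 - 2 * r) * wnat m (r - 1) i := by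
  obtain ⟨d, rfl⟩ : ∃ d, r = i + d + 1 := ⟨r - i - 1, by omega⟩
  obtain ⟨e, rfl⟩ : ∃ e, m = i + d + 1 + e := ⟨m - (i + d + 1), by omega⟩
  have h1 : i + d + 1 - i = d + 1 := by omega
  have h2 : i + d + 1 - 1 = i + d := by omega
  have h3 : i + d - i = d := by omega
  have h4 : i + d + 1 + e - i = d + e + 1 := by omega
  have h5 : 2 * (i + d + 1 + e) + 2 - 2 * (i + d + 1) = 2 * e + 2 := by omega
  simp only [wnat, h1, h2, h3, h4, h5]
  have hd : (i + d + 1).descFactorial (d + 1) = (i + d + 1) * (i + d).descFactorial d :=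
    Nat.succ_descFactorial_succ (i + d) d
  have hc : (d + e + 1).choose (d + 1) * (d + 1) = (d + e + 1).choose d * (e + 1) := by
    have := Nat.choose_succ_right_eq (d + e + 1) d
    rwa [show d + e + 1 - d = e + 1 by omega] at this
  calc 2 * (d + 1) * ((i + d + 1).descFactorial (d + 1) * (d + e + 1).choose (d + 1))
      = (2 * (i + d + 1) * (i + d).descFactorial d) * ((d + e + 1).choose (d + 1) * (d + 1)) := by
        rw [hd]; ring
    _ = (2 * (i + d + 1) * (i + d).descFactorial d) * ((d + e + 1).choose d * (e + 1)) := by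
        rw [hc]
    _ = (i + d + 1) * (2 * e + 2) * ((i + d).descFactorial d * (d + e + 1).choose d) := by ring

/-- the `w` recurrence for lemma B, stated over ℝ (the term `m - r - i` may be negative) -/
lemma wnat_rec2 {m r i : ℕ} (hi : 1 ≤ i) (hir : i ≤ r) (hrm : r ≤ m) :
    2 * (wnat m (r + 1) i : ℝ)
      = 2 * (wnat m r (i - 1) : ℝ)
        + (2 * (m : ℝ) - 2 * r - 2 * i) * (wnat m r i : ℝ) := by
  obtain ⟨j, rfl⟩ : ∃ j, i = j + 1 := ⟨i - 1, by omega⟩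
  obtain ⟨d, rfl⟩ : ∃ d, r = j + 1 + d := ⟨r - (j + 1), by omega⟩
  obtain ⟨e, rfl⟩ : ∃ e, m = j + 1 + d + e := ⟨m - (j + 1 + d), by omega⟩
  have h1 : j + 1 + d + 1 - (j + 1) = d + 1 := by omega
  have h2 : j + 1 + d - (j + 1) = d := by omega
  have h3 : j + 1 + d + e - (j + 1) = d + e := by omega
  have h6 : j + 1 - 1 = j := by omega
  have h4 : j + 1 + d - j = d + 1 := by omega
  have h5 : j + 1 + d + e - j = d + e + 1 := by omega
  simp only [wnat, h6, h1, h2, h3, h4, h5]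
  -- descFactorial facts
  have hd1 : (j + 1 + d + 1).descFactorial (d + 1)
      = (j + 1 + d + 1) * (j + 1 + d).descFactorial d := Nat.succ_descFactorial_succ _ d
  have hd2 : (j + 1 + d).descFactorial (d + 1) = (j + 1) * (j + 1 + d).descFactorial d := by
    have := Nat.descFactorial_succ (j + 1 + d) d
    rwa [show j + 1 + d - d = j + 1 by omega] at this
  -- choose facts
  have hp : (d + e + 1).choose (d + 1) = (d + e).choose d + (d + e).choose (d + 1) :=
    Nat.choose_succ_succ' (d + e) d
  have hc : (d + e).choose (d + 1) * (d + 1) = (d + e).choose d * e := by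
    have := Nat.choose_succ_right_eq (d + e) d
    rwa [show d + e - d = e by omega] at this
  have hcR : ((d + e).choose (d + 1) : ℝ) * (d + 1) = ((d + e).choose d : ℝ) * e := by
    exact_mod_cast hc
  push_cast [hd1, hd2, hp]
  linear_combination (2 : ℝ) * ((j + 1 + d).descFactorial d : ℝ) * hcR

/-- Lemma A : the odd-step coefficient recurrence. -/
lemma key1 (m : ℕ) (a : ℝ) {r : ℕ} (i : ℕ) (hr : 1 ≤ r) (hrm : r ≤ m) :
    vv m a r i
      = uu m a r i - (2 * (r : ℝ)) * (2 * (m : ℝ) + 2 - 2 * (r : ℝ)) * vv m a (r - 1) i := by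
  rcases lt_trichotomy i r with hlt | rfl | hgt
  · -- main case i < r
    have hir : i ≤ r := le_of_lt hlt
    have hir' : i ≤ r - 1 := by omega
    rw [uu, vv, vv, if_pos hir, if_pos hir, if_pos hir']
    have hpow : r - i = (r - 1 - i) + 1 := by omega
    have h9 : r - 1 + 1 = r := by omega
    rw [hpow, pow_succ, h9,
      Aprod_top a (by omega : i + 1 ≤ r), Aprod_bot a hlt]
    have hW : 2 * ((r : ℝ) - i) * (wnat m r i : ℝ)
        = (r : ℝ) * (2 * (m : ℝ) + 2 - 2 * (r : ℝ)) * (wnat m (r - 1) i : ℝ) := by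
      have h := wnat_rec1 hlt hrm
      have := congrArg (Nat.cast : ℕ → ℝ) h
      push_cast [Nat.cast_sub hir, Nat.cast_sub (by omega : 2 * r ≤ 2 * m + 2),
        Nat.cast_sub (by omega : 1 ≤ r)] at this
      linarith [this]
    linear_combination (-2 : ℝ) * (-2) ^ (r - 1 - i) * Aprod a (i + 1) r * hW
  · rw [uu_self, vv_self, vv_of_gt m a (by omega : i - 1 < i)]; ring
  · rw [uu_of_gt m a hgt, vv_of_gt m a hgt, vv_of_gt m a (by omega : r - 1 < i)]; ring

/-- Lemma C : the `u`-`v` proportionality. -/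
lemma key3 (m : ℕ) (a : ℝ) (r i : ℕ) :
    (2 * (i : ℝ) + 1 + a) * vv m a r i = (2 * (r : ℝ) + 1 + a) * uu m a r i := by
  rcases le_or_gt i r with hir | hgt
  · rw [uu, vv, if_pos hir, if_pos hir]
    have h1 : Aprod a i (r + 1) = Aprod a i r * (2 * (r : ℝ) + 1 + a) := Aprod_top a hir
    have h2 : Aprod a i (r + 1) = (2 * (i : ℝ) + 1 + a) * Aprod a (i + 1) (r + 1) :=
      Aprod_bot a (by omega)
    linear_combination ((-2 : ℝ)) ^ (r - i) * (wnat m r i : ℝ) * (h1 - h2)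
  · rw [uu_of_gt m a hgt, vv_of_gt m a hgt]; ring

/-- Lemma B without the `b` terms. -/
lemma key2' (m : ℕ) (a : ℝ) {r : ℕ} (i : ℕ) (hrm : r ≤ m) :
    uu m a (r + 1) i
      = (if i = 0 then 0 else vv m a r (i - 1))
        + (2 * (i : ℝ) + 1 + a) * (2 * (i : ℝ) + 1) * vv m a r i
        - (2 * (r : ℝ) + 1 + a) * (2 * (m : ℝ) + 1 - 2 * (r : ℝ)) * uu m a r i := by
  rcases lt_trichotomy i (r + 1) with hlt | rfl | hgt
  · -- i ≤ r
    have hir : i ≤ r := by omega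
    rcases Nat.eq_zero_or_pos i with rfl | hi
    · -- i = 0 case
      rw [if_pos rfl, uu, vv, if_pos (Nat.zero_le _), if_pos (Nat.zero_le _)]
      simp only [Nat.sub_zero, Nat.cast_zero]
      have hA1 : Aprod a 0 (r + 1) = (1 + a) * Aprod a 1 (r + 1) := by
        have := Aprod_bot a (show 0 < r + 1 by omega)
        simpa using this
      have hu : (2 * (r : ℝ) + 1 + a) * uu m a r 0
          = (1 + a) * ((-2) ^ r * (wnat m r 0 : ℝ) * Aprod a 1 (r + 1)) := by
        rw [uu, if_pos (Nat.zero_le _)]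
        simp only [Nat.sub_zero, Nat.cast_zero]
        have h1 : Aprod a 0 (r + 1) = Aprod a 0 r * (2 * (r : ℝ) + 1 + a) :=
          Aprod_top a (Nat.zero_le _)
        linear_combination ((-2 : ℝ)) ^ r * (wnat m r 0 : ℝ) * (hA1 - h1)
      have hW0 : 2 * (wnat m (r + 1) 0 : ℝ)
          = (2 * (m : ℝ) - 2 * (r : ℝ)) * (wnat m r 0 : ℝ) := by
        have hn : 2 * wnat m (r + 1) 0 = (2 * m - 2 * r) * wnat m r 0 := by
          simp only [wnat, Nat.sub_zero]
          have hd : (r + 1).descFactorial (r + 1) = (r + 1) * r.descFactorial r :=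
            Nat.succ_descFactorial_succ r r
          have hc : m.choose (r + 1) * (r + 1) = m.choose r * (m - r) :=
            Nat.choose_succ_right_eq m r
          calc 2 * ((r + 1).descFactorial (r + 1) * m.choose (r + 1))
              = 2 * r.descFactorial r * (m.choose (r + 1) * (r + 1)) := by rw [hd]; ring
            _ = 2 * r.descFactorial r * (m.choose r * (m - r)) := by rw [hc]
            _ = (2 * (m - r)) * (r.descFactorial r * m.choose r) := by ring
            _ = (2 * m - 2 * r) * (r.descFactorial r * m.choose r) := by
                rw [show 2 * (m - r) = 2 * m - 2 * r by omega]
        have := congrArg (Nat.cast : ℕ → ℝ) hn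
        push_cast [Nat.cast_sub (by omega : 2 * r ≤ 2 * m)] at this
        linarith [this]
      rw [pow_succ, hA1]
      linear_combination (2 * (m : ℝ) + 1 - 2 * (r : ℝ)) * hu
        + (-(1 + a)) * (-2 : ℝ) ^ r * Aprod a 1 (r + 1) * hW0
    · -- 1 ≤ i ≤ r
      have hi1 : i - 1 ≤ r := by omega
      rw [if_neg (by omega), uu, vv, vv, if_pos (by omega : i ≤ r + 1), if_pos hi1,
        if_pos hir]
      have him : i - 1 + 1 = i := by omega
      have hru : r - (i - 1) = r - i + 1 := by omega
      have hru2 : r + 1 - i = r - i + 1 := by omega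
      rw [him, hru, hru2, pow_succ]
      have hA : Aprod a i (r + 1) = (2 * (i : ℝ) + 1 + a) * Aprod a (i + 1) (r + 1) :=
        Aprod_bot a (by omega)
      have hu : (2 * (r : ℝ) + 1 + a) * uu m a r i
          = (2 * (i : ℝ) + 1 + a) * ((-2) ^ (r - i) * (wnat m r i : ℝ)
              * Aprod a (i + 1) (r + 1)) := by
        rw [uu, if_pos hir]
        have h1 : Aprod a i (r + 1) = Aprod a i r * (2 * (r : ℝ) + 1 + a) := Aprod_top a hir
        linear_combination ((-2 : ℝ)) ^ (r - i) * (wnat m r i : ℝ) * (hA - h1)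
      have hW := wnat_rec2 hi hir hrm
      rw [hA]
      linear_combination (2 * (m : ℝ) + 1 - 2 * (r : ℝ)) * hu
        + (-2 : ℝ) ^ (r - i) * (2 * (i : ℝ) + 1 + a) * Aprod a (i + 1) (r + 1) * (-1) * hW
  · -- i = r + 1
    rw [uu_self, if_neg (by omega), show r + 1 - 1 = r from by omega, vv_self,
      vv_of_gt m a (by omega : r < r + 1), uu_of_gt m a (by omega : r < r + 1)]
    ring
  · -- i > r + 1
    rw [uu_of_gt m a hgt, if_neg (by omega), vv_of_gt m a (by omega : r < i - 1),
      vv_of_gt m a (by omega : r < i), uu_of_gt m a (by omega : r < i)]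
    ring

/-- Lemma B : the even-step coefficient recurrence. -/
lemma key2 (m : ℕ) (a b : ℝ) {r : ℕ} (i : ℕ) (hrm : r ≤ m) :
    uu m a (r + 1) i
      = (if i = 0 then 0 else vv m a r (i - 1))
        + (2 * (i : ℝ) + 1 + a) * (2 * (i : ℝ) + 1 + b) * vv m a r i
        - (2 * (r : ℝ) + 1 + a) * (2 * (m : ℝ) + 1 - 2 * (r : ℝ) + b) * uu m a r i := by
  have h1 := key2' m a i hrm
  have h2 := key3 m a r i
  linear_combination h1 - b * h2

/-- superdiagonal scalar entries -/
def sR (a : ℝ) (i : ℕ) : ℝ := if (i + 1) % 2 = 0 then ((i + 1 : ℕ) : ℝ) else ((i + 1 : ℕ) : ℝ) + a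

/-- subdiagonal scalar entries -/
def tR (m : ℕ) (b : ℝ) (j : ℕ) : ℝ :=
  if (2 * m + 1 - j) % 2 = 0 then ((2 * m + 1 - j : ℕ) : ℝ) else ((2 * m + 1 - j : ℕ) : ℝ) + b

/-- the charmatrix of `Hmat (2m+1) a b` is our tridiagonal family -/
lemma charm (m : ℕ) (a b : ℝ) :
    charmatrix (Hmat (2 * m + 1) a b)
      = tri (fun _ => (X : ℝ[X])) (fun i => -(C (sR a i))) (fun j => -(C (tR m b j)))
          (2 * m + 1 + 1) := by
  ext i j
  rw [charmatrix_apply, tri_apply, Matrix.diagonal_apply]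
  by_cases hij : i = j
  · subst hij
    rw [if_pos rfl, if_pos rfl]
    have : Hmat (2 * m + 1) a b i i = 0 := by
      show (if (i : ℕ) + 1 = (i : ℕ) then _ else if (i : ℕ) + 1 = (i : ℕ) then _ else 0) = 0
      rw [if_neg (by omega), if_neg (by omega)]
    rw [this, _root_.map_zero, sub_zero]
  · have hvij : ¬ ((i : ℕ) = (j : ℕ)) := fun h => hij (Fin.ext h)
    rw [if_neg hij, if_neg hvij, zero_sub]
    by_cases h1 : (i : ℕ) + 1 = (j : ℕ)
    · rw [if_pos h1]
      have : Hmat (2 * m + 1) a b i j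
          = if ((i : ℕ) + 1) % 2 = 0 then ((i : ℕ) + 1 : ℝ) else ((i : ℕ) + 1 : ℝ) + a := by
        show (if (i : ℕ) + 1 = (j : ℕ) then _ else _) = _
        rw [if_pos h1]
      rw [this, sR]
      push_cast
      norm_num
    · rw [if_neg h1]
      by_cases h2 : (j : ℕ) + 1 = (i : ℕ)
      · rw [if_pos h2]
        have : Hmat (2 * m + 1) a b i j
            = if (2 * m + 1 - (j : ℕ)) % 2 = 0 then ((2 * m + 1 - (j : ℕ) : ℕ) : ℝ)
              else ((2 * m + 1 - (j : ℕ) : ℕ) : ℝ) + b := by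
          show (if (i : ℕ) + 1 = (j : ℕ) then _ else if (j : ℕ) + 1 = (i : ℕ) then _ else _) = _
          rw [if_neg h1, if_pos h2]
        rw [this, tR]
      · rw [if_neg h2]
        have : Hmat (2 * m + 1) a b i j = 0 := by
          show (if (i : ℕ) + 1 = (j : ℕ) then _ else if (j : ℕ) + 1 = (i : ℕ) then _ else _) = 0
          rw [if_neg h1, if_neg h2]
        rw [this, _root_.map_zero, neg_zero]
/-- basis polynomials -/
def phi (a b : ℝ) (i : ℕ) : ℝ[X] :=
  ∏ k ∈ Finset.range i, (X ^ 2 - C ((2 * (k : ℝ) + 1 + a) * (2 * (k : ℝ) + 1 + b)))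

lemma phi_zero (a b : ℝ) : phi a b 0 = 1 := by simp [phi]

lemma phi_X2 (a b : ℝ) (i : ℕ) :
    X ^ 2 * phi a b i
      = phi a b (i + 1) + C ((2 * (i : ℝ) + 1 + a) * (2 * (i : ℝ) + 1 + b)) * phi a b i := by
  rw [phi, phi, Finset.prod_range_succ]
  ring

/-- entry values at even positions -/
lemma sR_even (a : ℝ) (r : ℕ) : sR a (2 * r) = 2 * (r : ℝ) + 1 + a := by
  rw [sR, if_neg (by omega)]
  push_cast; ring

lemma tR_even (m : ℕ) (b : ℝ) {r : ℕ} (h : r ≤ m) :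
    tR m b (2 * r) = 2 * (m : ℝ) + 1 - 2 * (r : ℝ) + b := by
  rw [tR, if_neg (by omega)]
  rw [Nat.cast_sub (by omega)]
  push_cast; ring

lemma sR_odd (a : ℝ) (r : ℕ) : sR a (2 * r + 1) = 2 * (r : ℝ) + 2 := by
  rw [sR, if_pos (by omega)]
  push_cast; ring

lemma tR_odd (m : ℕ) (b : ℝ) {r : ℕ} (h : r ≤ m) :
    tR m b (2 * r + 1) = 2 * (m : ℝ) - 2 * (r : ℝ) := by
  rw [tR, if_pos (by omega)]
  rw [Nat.cast_sub (by omega)]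
  push_cast; ring

/-- the big induction: closed form for the leading principal minors -/
lemma minors (m : ℕ) (a b : ℝ) : ∀ r : ℕ, r ≤ m + 1 →
    ((tri (fun _ => (X : ℝ[X])) (fun i => -(C (sR a i))) (fun j => -(C (tR m b j))) (2 * r)).det
        = ∑ i ∈ Finset.range (r + 1), C (uu m a r i) * phi a b i)
    ∧ (r ≤ m →
      (tri (fun _ => (X : ℝ[X])) (fun i => -(C (sR a i))) (fun j => -(C (tR m b j)))
          (2 * r + 1)).det
        = X * ∑ i ∈ Finset.range (r + 1), C (vv m a r i) * phi a b i) := by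
  set S : ℕ → ℝ[X] := fun i => -(C (sR a i)) with hS
  set T : ℕ → ℝ[X] := fun j => -(C (tR m b j)) with hT
  intro r
  induction r with
  | zero =>
    intro _
    constructor
    · rw [show 2 * 0 = 0 from rfl, tri_det_zero]
      simp [phi_zero, uu_self m a 0]
    · intro _
      rw [show 2 * 0 + 1 = 1 from rfl, tri_det_one]
      simp [phi_zero, vv_self m a 0]
  | succ r ih =>
    intro hr1
    have hrm : r ≤ m := by omega
    obtain ⟨ihe, iho⟩ := ih (by omega)
    have iho := iho hrm
    have heven :
        (tri (fun _ => (X : ℝ[X])) S T (2 * (r + 1))).det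
          = ∑ i ∈ Finset.range (r + 2), C (uu m a (r + 1) i) * phi a b i := by
      have hrec := tri_det_succ_succ (fun _ => (X : ℝ[X])) S T (2 * r)
      rw [show 2 * r + 2 = 2 * (r + 1) from by ring] at hrec
      rw [hrec, ihe, iho]
      have hst : S (2 * r) * T (2 * r)
          = C ((2 * (r : ℝ) + 1 + a) * (2 * (m : ℝ) + 1 - 2 * (r : ℝ) + b)) := by
        rw [hS, hT]
        simp only
        rw [sR_even, tR_even m b hrm, neg_mul_neg, ← C_mul]
      rw [hst]
      -- expand target using key2
      have expand : ∀ i ∈ Finset.range (r + 2),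
          C (uu m a (r + 1) i) * phi a b i
            = (if i = 0 then 0 else C (vv m a r (i - 1)) * phi a b i)
              + C ((2 * (i : ℝ) + 1 + a) * (2 * (i : ℝ) + 1 + b)) * (C (vv m a r i) * phi a b i)
              - C ((2 * (r : ℝ) + 1 + a) * (2 * (m : ℝ) + 1 - 2 * (r : ℝ) + b))
                  * (C (uu m a r i) * phi a b i) := by
        intro i _
        rw [key2 m a b i hrm]
        by_cases hi : i = 0
        · subst hi
          simp only [↓reduceIte, _root_.map_sub, _root_.map_add, _root_.map_mul, map_zero]
          ring
        · simp only [if_neg hi, _root_.map_sub, _root_.map_add, _root_.map_mul]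
          ring
      rw [Finset.sum_congr rfl expand]
      rw [Finset.sum_sub_distrib, Finset.sum_add_distrib]
      -- first sum : shift
      have hshift : (∑ i ∈ Finset.range (r + 2),
          (if i = 0 then 0 else C (vv m a r (i - 1)) * phi a b i))
            = ∑ i ∈ Finset.range (r + 1), C (vv m a r i) * phi a b (i + 1) := by
        rw [Finset.sum_range_succ']
        simp
      -- second sum : extend
      have hext2 : (∑ i ∈ Finset.range (r + 2),
          C ((2 * (i : ℝ) + 1 + a) * (2 * (i : ℝ) + 1 + b)) * (C (vv m a r i) * phi a b i))
            = ∑ i ∈ Finset.range (r + 1),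
              C ((2 * (i : ℝ) + 1 + a) * (2 * (i : ℝ) + 1 + b))
                * (C (vv m a r i) * phi a b i) := by
        rw [Finset.sum_range_succ, vv_of_gt m a (by omega : r < r + 1)]
        simp
      have hext3 : (∑ i ∈ Finset.range (r + 2),
          C ((2 * (r : ℝ) + 1 + a) * (2 * (m : ℝ) + 1 - 2 * (r : ℝ) + b))
            * (C (uu m a r i) * phi a b i))
            = C ((2 * (r : ℝ) + 1 + a) * (2 * (m : ℝ) + 1 - 2 * (r : ℝ) + b))
              * ∑ i ∈ Finset.range (r + 1), C (uu m a r i) * phi a b i := by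
        rw [Finset.sum_range_succ, uu_of_gt m a (by omega : r < r + 1), Finset.mul_sum]
        simp
      rw [hshift, hext2, hext3]
      -- now the LHS
      have hL : X * (X * ∑ i ∈ Finset.range (r + 1), C (vv m a r i) * phi a b i)
          = ∑ i ∈ Finset.range (r + 1), C (vv m a r i) * phi a b (i + 1)
            + ∑ i ∈ Finset.range (r + 1),
                C ((2 * (i : ℝ) + 1 + a) * (2 * (i : ℝ) + 1 + b))
                  * (C (vv m a r i) * phi a b i) := by
        rw [← Finset.sum_add_distrib, Finset.mul_sum, Finset.mul_sum]
        refine Finset.sum_congr rfl fun i _ => ?_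
        have := phi_X2 a b i
        calc X * (X * (C (vv m a r i) * phi a b i))
            = C (vv m a r i) * (X ^ 2 * phi a b i) := by ring
          _ = C (vv m a r i) * (phi a b (i + 1)
                + C ((2 * (i : ℝ) + 1 + a) * (2 * (i : ℝ) + 1 + b)) * phi a b i) := by rw [this]
          _ = _ := by ring
      rw [hL]
      try ring
    refine ⟨heven, fun hr1m => ?_⟩
    -- odd part
    have hrec := tri_det_succ_succ (fun _ => (X : ℝ[X])) S T (2 * r + 1)
    rw [show 2 * r + 1 + 2 = 2 * (r + 1) + 1 from by ring,
      show 2 * r + 1 + 1 = 2 * (r + 1) from by ring] at hrec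
    rw [hrec, heven, iho]
    have hst : S (2 * r + 1) * T (2 * r + 1)
        = C ((2 * (r : ℝ) + 2) * (2 * (m : ℝ) - 2 * (r : ℝ))) := by
      rw [hS, hT]
      simp only
      rw [sR_odd, tR_odd m b hrm, neg_mul_neg, ← C_mul]
    rw [hst]
    have hext : (∑ i ∈ Finset.range (r + 2), C (vv m a r i) * phi a b i)
        = ∑ i ∈ Finset.range (r + 1), C (vv m a r i) * phi a b i := by
      rw [Finset.sum_range_succ, vv_of_gt m a (by omega : r < r + 1)]
      simp
    rw [← hext]
    have step : ∀ i ∈ Finset.range (r + 2),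
        C (vv m a (r + 1) i) * phi a b i
          = C (uu m a (r + 1) i) * phi a b i
            - C ((2 * (r : ℝ) + 2) * (2 * (m : ℝ) - 2 * (r : ℝ)))
                * (C (vv m a r i) * phi a b i) := by
      intro i _
      have hk := key1 m a i (by omega : 1 ≤ r + 1) (by omega : r + 1 ≤ m)
      rw [show r + 1 - 1 = r from by omega] at hk
      rw [hk]
      simp only [Nat.cast_add, Nat.cast_one, _root_.map_sub, _root_.map_add, _root_.map_mul,
        _root_.map_one]
      ring
    rw [Finset.sum_congr rfl step, Finset.sum_sub_distrib, ← Finset.mul_sum]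
    ring

lemma Hmat_charpoly_eq (m : ℕ) (a b : ℝ) :
    (Hmat (2 * m + 1) a b).charpoly = phi a b (m + 1) := by
  rw [Matrix.charpoly, charm m a b, show 2 * m + 1 + 1 = 2 * (m + 1) from by ring]
  obtain ⟨he, _⟩ := minors m a b (m + 1) le_rfl
  rw [he, Finset.sum_range_succ, uu_self]
  have hz : ∀ i ∈ Finset.range (m + 1), C (uu m a (m + 1) i) * phi a b i = 0 := by
    intro i hi
    rw [uu_last m a (by simpa using Nat.lt_succ_iff.mp (Finset.mem_range.mp hi)), map_zero, zero_mul]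
  rw [Finset.sum_eq_zero hz, zero_add, _root_.map_one, one_mul]

lemma mem_spectrum_iff_eval {N : ℕ} (M : Matrix (Fin N) (Fin N) ℝ) (x : ℝ) :
    x ∈ spectrum ℝ M ↔ M.charpoly.eval x = 0 := by
  rw [spectrum.mem_iff, Matrix.isUnit_iff_isUnit_det, isUnit_iff_ne_zero, not_ne_iff]
  have h : M.charpoly.eval x = (algebraMap ℝ (Matrix (Fin N) (Fin N) ℝ) x - M).det := by
    rw [Matrix.charpoly, _root_.eval_det, matPolyEquiv_charmatrix, eval_sub, eval_X, eval_C]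
    congr 1
  rw [h]


/-- for `n = 2m+1` odd, the characteristic polynomial of `H_n(a,b)` is
`∏_{k=0}^m (λ² - (2k+1+a)(2k+1+b))`; in particular the eigenvalues are
`±√((2k+1+a)(2k+1+b))` for `k = 0, ..., m`. -/
theorem Hmat_odd_charpoly (m : ℕ) (a b : ℝ) :
    (Hmat (2 * m + 1) a b).charpoly
        = ∏ k ∈ Finset.range (m + 1),
            (X ^ 2 - C ((2 * (k : ℝ) + 1 + a) * (2 * (k : ℝ) + 1 + b))) ∧
      ∀ x : ℝ, x ∈ spectrum ℝ (Hmat (2 * m + 1) a b) ↔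
        ∃ k ∈ Finset.range (m + 1),
          x ^ 2 = (2 * (k : ℝ) + 1 + a) * (2 * (k : ℝ) + 1 + b) := by
  have hcp := Hmat_charpoly_eq m a b
  constructor
  · exact hcp
  · intro x
    rw [mem_spectrum_iff_eval, hcp, phi, Polynomial.eval_prod, Finset.prod_eq_zero_iff]
    simp only [eval_sub, eval_pow, eval_X, eval_C, sub_eq_zero]
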